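/- Ershov's recursion theorem: Let γ be a precomplete numbering of a set S and let f : ℕ → ℕ be a total computable function. Then f has a fixed point modulo ~γ, i.e. there exists a number n such that f(n) ~γ n (that is, γ(f(n)) = γ(n)). -/

import Mathlib

/-- A numbering `γ : ℕ → S` (a surjection) is precomplete if every partial computable
function can be totalized modulo `~γ`. -/
def Precomplete {S : Type*} (γ : ℕ → S) : Prop :=
  ∀ ψ : ℕ →. ℕ, Nat.Partrec ψ →
    ∃ f : ℕ → ℕ, Computable f ∧ ∀ n : ℕ, ∀ y ∈ ψ n, γ (f n) = γ y

/-- Ershov's recursion theorem: every total computable function has a fixed point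
modulo a precomplete numbering. -/
theorem ershov_recursion {S : Type*} (γ : ℕ → S) (hsurj : Function.Surjective γ)
    (hpre : Precomplete γ) (f : ℕ → ℕ) (hf : Computable f) :
    ∃ n : ℕ, γ (f n) = γ n := by
  -- diagonal partial function ψ n = eval (ofNat Code n) n
  set ψ : ℕ →. ℕ := fun n => Nat.Partrec.Code.eval (Denumerable.ofNat Nat.Partrec.Code n) n with hψ
  have hψp : Nat.Partrec ψ := by
    rw [← Partrec.nat_iff]
    exact (Nat.Partrec.Code.eval_part.comp
      ((Computable.ofNat Nat.Partrec.Code).comp Computable.id) Computable.id)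
  obtain ⟨g, hg, hgtot⟩ := hpre ψ hψp
  -- h = f ∘ g is total computable, get a code c for it
  have hh : Nat.Partrec (fun n => Part.some (f (g n)) : ℕ →. ℕ) := by
    refine Partrec.nat_iff.mp ?_
    exact (hf.comp hg).partrec
  obtain ⟨c, hc⟩ := Nat.Partrec.Code.exists_code.1 hh
  set e := Encodable.encode c with he
  have hce : Denumerable.ofNat Nat.Partrec.Code e = c := Denumerable.ofNat_encode c
  have hmem : f (g e) ∈ ψ e := by
    simp only [hψ, hce, hc]
    exact Part.mem_some _
  exact ⟨g e, (hgtot e _ hmem).symm⟩
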